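/- Let G be a graph of order n > 2 with m edges, and suppose the second largest vertex degree Δ₂ satisfies Δ₂ < 2m/n. Let k (2 ≤ k ≤ n) be the largest positive integer such that d₂ = d₃ = ⋯ = d_k = Δ₂. Then k ≥ Δ₂ + n + 1 - Δ₁ and Δ₂ + n + 1 - Δ₁ ≥ Δ₂ + 2; in particular k ≥ Δ₂ + 2. -/

import Mathlib

open Finset

/-- The `k`-th largest element (1-indexed) of a multiset of naturals, with default `0`. -/
def kthLargestN (s : Multiset ℕ) (k : ℕ) : ℕ :=
  (s.sort (· ≤ ·)).reverse.getD (k - 1) 0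

/-- `degSeq G k` is the `k`-th largest vertex degree (1-indexed) of `G`,
so `degSeq G 1 = Δ₁` and `degSeq G 2 = Δ₂`. -/
def degSeq {n : ℕ} (G : SimpleGraph (Fin n)) [DecidableRel G.Adj] (k : ℕ) : ℕ :=
  kthLargestN (Finset.univ.val.map (fun v => G.degree v)) k

/-- Let `G` be a graph of order `n > 2` with `m` edges, `Δ₂ < 2m/n`, and
let `k` (`2 ≤ k ≤ n`) be the largest positive integer with `d₂ = ⋯ = d_k = Δ₂`.
Then `k ≥ Δ₂ + n + 1 - Δ₁ ≥ Δ₂ + 2`; in particular `k ≥ Δ₂ + 2`. -/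
theorem stmt3 {n k : ℕ} (hn : 2 < n) (G : SimpleGraph (Fin n)) [DecidableRel G.Adj]
    (h : (degSeq G 2 : ℝ) < 2 * (G.edgeFinset.card : ℝ) / n)
    (hk : IsGreatest {j | 2 ≤ j ∧ j ≤ n ∧ ∀ i, 2 ≤ i → i ≤ j → degSeq G i = degSeq G 2} k) :
    (k : ℝ) ≥ (degSeq G 2 : ℝ) + (n : ℝ) + 1 - (degSeq G 1 : ℝ) ∧
      (degSeq G 2 : ℝ) + (n : ℝ) + 1 - (degSeq G 1 : ℝ) ≥ (degSeq G 2 : ℝ) + 2 ∧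
      (k : ℝ) ≥ (degSeq G 2 : ℝ) + 2 := by
  classical
  obtain ⟨⟨hk2, hkn, hkeq⟩, hkmax⟩ := hk
  set m := G.edgeFinset.card with hm
  set s : Multiset ℕ := Finset.univ.val.map (fun v => G.degree v) with hs
  set l : List ℕ := (s.sort (· ≤ ·)).reverse with hl
  have hlen : l.length = n := by
    rw [hl, List.length_reverse, Multiset.length_sort, hs]
    simp
  have hsorted : l.Pairwise (· ≥ ·) := by
    rw [hl, List.pairwise_reverse]
    exact (Multiset.pairwise_sort s (· ≤ ·)).imp fun h => h
  have hdeg : ∀ i, degSeq G (i + 1) = l.getD i 0 := by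
    intro i
    rw [hl, hs]
    simp [degSeq, kthLargestN]
  have hsumr : ∑ i ∈ Finset.range n, l.getD i 0 = 2 * m := by
    have h1 : l.sum = 2 * m := by
      rw [hl, List.sum_reverse, ← Multiset.sum_coe, Multiset.sort_eq, hs]
      exact G.sum_degrees_eq_twice_card_edges
    rw [← h1]
    conv_rhs => rw [← List.ofFn_getElem (xs := l), List.sum_ofFn]
    rw [Finset.sum_range fun i => l.getD i 0]
    rw [show Finset.univ = (Finset.univ : Finset (Fin l.length)) from rfl]
    rw [← hlen]
    refine Finset.sum_congr rfl fun i _ => ?_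
    rw [List.getD_eq_getElem _ _ i.isLt]
  have hmem : ∀ x ∈ l, x < n := by
    intro x hx
    rw [hl, List.mem_reverse, ← Multiset.mem_coe, Multiset.sort_eq, hs] at hx
    obtain ⟨v, _, rfl⟩ := Multiset.mem_map.mp hx
    simpa using G.degree_lt_card_verts v
  have hanti : ∀ i j, i ≤ j → j < n → l.getD j 0 ≤ l.getD i 0 := by
    intro i j hij hj
    have hj' : j < l.length := hlen ▸ hj
    have hi' : i < l.length := lt_of_le_of_lt hij hj'
    rw [List.getD_eq_getElem _ _ hi', List.getD_eq_getElem _ _ hj']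
    have := hsorted.rel_get_of_le (a := ⟨i, hi'⟩) (b := ⟨j, hj'⟩) (by exact hij)
    simpa using this
  set D1 := degSeq G 1 with hD1def
  set D2 := degSeq G 2 with hD2def
  have hD1 : D1 = l.getD 0 0 := hdeg 0
  have hD2 : D2 = l.getD 1 0 := hdeg 1
  -- nat form of the average-degree hypothesis
  have hnm : n * D2 < 2 * m := by
    have hn0 : (0 : ℝ) < n := by positivity
    rw [lt_div_iff₀ hn0] at h
    have : (D2 : ℝ) * n < 2 * m := h
    have h' : D2 * n < 2 * m := by exact_mod_cast this
    rw [Nat.mul_comm]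
    exact h'
  -- middle values
  have hmid : ∀ i ∈ Finset.Ico 1 k, l.getD i 0 = D2 := by
    intro i hi
    rw [Finset.mem_Ico] at hi
    rw [← hdeg i]
    exact hkeq (i + 1) (by omega) (by omega)
  -- tail values
  have htail : ∀ i, k ≤ i → i < n → l.getD i 0 < D2 := by
    intro i hki hin
    have hkn' : k < n := lt_of_le_of_lt hki hin
    have hle : l.getD k 0 ≤ D2 := by
      rw [hD2]
      exact hanti 1 k (by omega) hkn'
    have hne : l.getD k 0 ≠ D2 := by
      intro heq
      have hmem' : k + 1 ≤ k := hkmax ⟨by omega, by omega, fun j h2j hjk => ?_⟩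
      · omega
      · by_cases hjk' : j ≤ k
        · exact hkeq j h2j hjk'
        · have : j = k + 1 := by omega
          rw [this, hdeg k, heq]
    have := hanti k i hki hin
    omega
  have hD1lt : D1 < n := by
    have h0 : (0 : ℕ) < l.length := by omega
    rw [hD1, List.getD_eq_getElem _ _ h0]
    exact hmem _ (List.getElem_mem _)
  -- the key counting inequality, over ℤ
  have hkey : D2 + n + 1 ≤ D1 + k := by
    have hsplit1 : ∑ i ∈ Finset.Ico 0 1, (l.getD i 0 : ℤ) + ∑ i ∈ Finset.Ico 1 k, (l.getD i 0 : ℤ)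
        = ∑ i ∈ Finset.Ico 0 k, (l.getD i 0 : ℤ) :=
      Finset.sum_Ico_consecutive _ (by omega) (by omega)
    have hsplit2 : ∑ i ∈ Finset.Ico 0 k, (l.getD i 0 : ℤ) + ∑ i ∈ Finset.Ico k n, (l.getD i 0 : ℤ)
        = ∑ i ∈ Finset.Ico 0 n, (l.getD i 0 : ℤ) :=
      Finset.sum_Ico_consecutive _ (by omega) (by omega)
    have h01 : ∑ i ∈ Finset.Ico 0 1, (l.getD i 0 : ℤ) = (D1 : ℤ) := by
      simp [hD1]
    have h1k : ∑ i ∈ Finset.Ico 1 k, (l.getD i 0 : ℤ) = (k - 1 : ℤ) * D2 := by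
      rw [Finset.sum_congr rfl (fun i hi => by rw [hmid i hi])]
      rw [Finset.sum_const, Nat.card_Ico, nsmul_eq_mul,
        (by omega : ((k - 1 : ℕ) : ℤ) = (k : ℤ) - 1)]
    have hknb : ∑ i ∈ Finset.Ico k n, (l.getD i 0 : ℤ) ≤ (n - k : ℤ) * ((D2 : ℤ) - 1) := by
      calc ∑ i ∈ Finset.Ico k n, (l.getD i 0 : ℤ)
          ≤ ∑ _i ∈ Finset.Ico k n, ((D2 : ℤ) - 1) := by
            refine Finset.sum_le_sum fun i hi => ?_
            rw [Finset.mem_Ico] at hi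
            have := htail i hi.1 hi.2
            omega
        _ = (n - k : ℤ) * ((D2 : ℤ) - 1) := by
            rw [Finset.sum_const, Nat.card_Ico, nsmul_eq_mul,
              (by omega : ((n - k : ℕ) : ℤ) = (n : ℤ) - k)]
    have htot : ∑ i ∈ Finset.Ico 0 n, (l.getD i 0 : ℤ) = 2 * m := by
      rw [← Finset.range_eq_Ico, ← Nat.cast_sum]
      exact_mod_cast hsumr
    have hnm' : (n : ℤ) * D2 < 2 * m := by exact_mod_cast hnm
    have hineq : (n : ℤ) * D2 + 1 ≤ (D1 : ℤ) + (k - 1 : ℤ) * D2 + (n - k : ℤ) * ((D2 : ℤ) - 1) := by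
      linarith [hsplit1, hsplit2, h01, h1k, hknb, htot, hnm']
    have : (D2 : ℤ) + n + 1 ≤ (D1 : ℤ) + k := by nlinarith [hineq]
    exact_mod_cast this
  refine ⟨?_, ?_, ?_⟩
  · have := hkey
    have h1 : (D2 : ℝ) + n + 1 ≤ (D1 : ℝ) + k := by exact_mod_cast this
    linarith
  · have h2 : (D1 : ℝ) ≤ (n : ℝ) - 1 := by
      have : (D1 : ℝ) < n := by exact_mod_cast hD1lt
      have hD1n : D1 + 1 ≤ n := hD1lt
      have := (by exact_mod_cast hD1n : (D1 : ℝ) + 1 ≤ n)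
      linarith
    linarith
  · have h1 : (D2 : ℝ) + n + 1 ≤ (D1 : ℝ) + k := by exact_mod_cast hkey
    have hD1n : D1 + 1 ≤ n := hD1lt
    have h2 := (by exact_mod_cast hD1n : (D1 : ℝ) + 1 ≤ n)
    linarith
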